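/- Let F be a field, λ ∈ F, and let s, t be positive integers. Then the Kronecker product J_s(0) ⊗ J_t(λ) is nilpotent with minimal polynomial X^{s ∧_λ t}. -/

import Mathlib

open Polynomial Matrix
open scoped Kronecker

open scoped Classical in
/-- `wedgeL lam t s` is the operation `t ∧_λ s`: it equals `min t s` if `λ = 0`,
`t` if `λ ≠ 0` and `s ≠ 0`, and `0` if `λ ≠ 0` and `s = 0`. -/
noncomputable def wedgeL {F : Type*} [Field F] (lam : F) (t s : ℕ) : ℕ :=
  if lam = 0 then min t s else if s = 0 then 0 else t

/-- `jordan F s a` is the `s × s` Jordan block with eigenvalue `a`: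
the entry `(i, j)` is `a` if `j = i`, `1` if `j = i + 1`, and `0` otherwise. -/
def jordan (F : Type*) [Field F] (s : ℕ) (a : F) : Matrix (Fin s) (Fin s) F :=
  Matrix.of fun i j => if (j : ℕ) = (i : ℕ) then a else if (j : ℕ) = (i : ℕ) + 1 then 1 else 0

lemma jordan_zero_pow_apply (F : Type*) [Field F] (n : ℕ) (k : ℕ) (i j : Fin n) :
    ((jordan F n 0) ^ k) i j = if (j : ℕ) = (i : ℕ) + k then 1 else 0 := by
  induction k generalizing j with
  | zero => simp [Matrix.one_apply, Fin.ext_iff, eq_comm]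
  | succ k ih =>
    rw [pow_succ, Matrix.mul_apply]
    simp only [ih, ite_mul, one_mul, zero_mul]
    by_cases h : (i : ℕ) + k < n
    · have hmem : (⟨(i : ℕ) + k, h⟩ : Fin n) ∈ Finset.univ := Finset.mem_univ _
      rw [Finset.sum_eq_single (⟨(i : ℕ) + k, h⟩ : Fin n)]
      · simp only [jordan, Matrix.of_apply]
        split_ifs <;> simp_all <;> omega
      · intro m _ hm
        rw [if_neg]
        exact fun hc => hm (Fin.ext hc)
      · intro h'; exact absurd hmem h'
    · rw [Finset.sum_eq_zero, if_neg (by omega)]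
      intro m _
      rw [if_neg (by omega)]

lemma jordan_zero_pow_eq_zero (F : Type*) [Field F] (n : ℕ) {k : ℕ} (h : n ≤ k) :
    (jordan F n 0) ^ k = 0 := by
  ext i j
  rw [jordan_zero_pow_apply]
  simp only [Matrix.zero_apply]
  rw [if_neg (by omega)]

lemma jordan_zero_pow_ne_zero (F : Type*) [Field F] (n : ℕ) {k : ℕ} (h : k < n) :
    (jordan F n 0) ^ k ≠ 0 := by
  intro hc
  have := congrFun (congrFun hc ⟨0, by omega⟩) ⟨k, h⟩
  rw [jordan_zero_pow_apply] at this
  simp at this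

lemma jordan_det (F : Type*) [Field F] (n : ℕ) (a : F) :
    (jordan F n a).det = a ^ n := by
  rw [Matrix.det_of_upperTriangular]
  · simp [jordan]
  · intro i j hij
    simp only [Function.id_def] at hij
    have : (j : ℕ) < (i : ℕ) := hij
    simp only [jordan, Matrix.of_apply]
    rw [if_neg (by omega), if_neg (by omega)]

lemma jordan_pow_ne_zero (F : Type*) [Field F] {n : ℕ} (hn : 0 < n) {a : F} (ha : a ≠ 0)
    (k : ℕ) : (jordan F n a) ^ k ≠ 0 := by
  intro hc
  have hd : ((jordan F n a) ^ k).det = (a ^ n) ^ k := by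
    rw [Matrix.det_pow, jordan_det]
  rw [hc] at hd
  have : Nonempty (Fin n) := ⟨⟨0, hn⟩⟩
  rw [Matrix.det_zero] at hd
  exact (pow_ne_zero _ (pow_ne_zero _ ha)) hd.symm

lemma kronecker_pow {F : Type*} [Field F] {m n : ℕ} (A : Matrix (Fin m) (Fin m) F)
    (B : Matrix (Fin n) (Fin n) F) (k : ℕ) : (A ⊗ₖ B) ^ k = (A ^ k) ⊗ₖ (B ^ k) := by
  induction k with
  | zero => simp [Matrix.one_kronecker_one]
  | succ k ih => rw [pow_succ, pow_succ, pow_succ, ih, Matrix.mul_kronecker_mul]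

lemma kronecker_ne_zero {F : Type*} [Field F] {m n : ℕ} {A : Matrix (Fin m) (Fin m) F}
    {B : Matrix (Fin n) (Fin n) F} (hA : A ≠ 0) (hB : B ≠ 0) : A ⊗ₖ B ≠ 0 := by
  have hA' : ∃ i j, A i j ≠ 0 := by
    by_contra h; push_neg at h; exact hA (by ext i j; simpa using h i j)
  have hB' : ∃ i j, B i j ≠ 0 := by
    by_contra h; push_neg at h; exact hB (by ext i j; simpa using h i j)
  obtain ⟨i, j, hij⟩ := hA'
  obtain ⟨i', j', hij'⟩ := hB'
  intro hc
  have := congrFun (congrFun hc (i, i')) (j, j')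
  rw [Matrix.kroneckerMap_apply] at this
  exact mul_ne_zero hij hij' this

lemma minpoly_of_nilpotent_index {F : Type*} [Field F] {n : Type*} [Fintype n] [DecidableEq n]
    (M : Matrix n n F) (k : ℕ) (h1 : M ^ k = 0)
    (h2 : ∀ l, M ^ l = 0 → k ≤ l) : minpoly F M = X ^ k := by
  have hint : IsIntegral F M := ⟨X ^ k, monic_X_pow k, by simp [h1]⟩
  have hd : minpoly F M ∣ X ^ k := minpoly.dvd _ _ (by simp [h1])
  obtain ⟨i, hik, ha⟩ := (dvd_prime_pow Polynomial.prime_X k).mp hd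
  have heq : minpoly F M = X ^ i :=
    Polynomial.eq_of_monic_of_associated (minpoly.monic hint) (monic_X_pow i) ha
  have hMi : M ^ i = 0 := by
    have := minpoly.aeval F M
    rw [heq] at this
    simpa using this
  have := h2 i hMi
  rw [heq, le_antisymm hik this]

/-- Let `F` be a field, `λ ∈ F`, and `s`, `t` positive integers. Then `J_s(0) ⊗ J_t(λ)` is
nilpotent with minimal polynomial `X ^ (s ∧_λ t)`. -/
theorem minpoly_jordan_zero_kronecker (F : Type*) [Field F] (lam : F)
    (s t : ℕ) (hs : 0 < s) (ht : 0 < t) :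
    IsNilpotent (jordan F s 0 ⊗ₖ jordan F t lam) ∧
      minpoly F (jordan F s 0 ⊗ₖ jordan F t lam) = X ^ wedgeL lam s t := by
  set k := wedgeL lam s t with hk
  have hpow : ∀ l : ℕ, (jordan F s 0 ⊗ₖ jordan F t lam) ^ l
      = ((jordan F s 0) ^ l) ⊗ₖ ((jordan F t lam) ^ l) := fun l => kronecker_pow _ _ l
  have h1 : (jordan F s 0 ⊗ₖ jordan F t lam) ^ k = 0 := by
    rw [hpow]
    by_cases hlam : lam = 0
    · have : k = min s t := by simp [hk, wedgeL, hlam]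
      rcases le_total s t with h | h
      · rw [jordan_zero_pow_eq_zero F s (by omega), Matrix.zero_kronecker]
      · subst hlam
        rw [jordan_zero_pow_eq_zero F t (by omega), Matrix.kronecker_zero]
    · have : k = s := by simp [hk, wedgeL, hlam, ht.ne']
      rw [this, jordan_zero_pow_eq_zero F s le_rfl, Matrix.zero_kronecker]
  have h2 : ∀ l, (jordan F s 0 ⊗ₖ jordan F t lam) ^ l = 0 → k ≤ l := by
    intro l hl
    by_contra hlt
    push_neg at hlt
    rw [hpow] at hl
    by_cases hlam : lam = 0
    · have hkm : k = min s t := by simp [hk, wedgeL, hlam]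
      subst hlam
      exact kronecker_ne_zero (jordan_zero_pow_ne_zero F s (by omega))
        (jordan_zero_pow_ne_zero F t (by omega)) hl
    · have hks : k = s := by simp [hk, wedgeL, hlam, ht.ne']
      exact kronecker_ne_zero (jordan_zero_pow_ne_zero F s (by omega))
        (jordan_pow_ne_zero F ht hlam l) hl
  exact ⟨⟨k, h1⟩, minpoly_of_nilpotent_index _ k h1 h2⟩
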